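/- Assume b > μ₂, let (λ*, c*) be the critical pair (Δ(λ*, c*) = 0 and d₂(e^{λ*} − e^{−λ*}) = c*), and let c > c*. Then there exist λ₁ and λ₂ with 0 < λ₁ < λ* < λ₂ such that Δ(λ₁, c) = Δ(λ₂, c) = 0; moreover Δ(λ, c) > 0 for 0 < λ < λ₁, Δ(λ, c) < 0 for λ₁ < λ < λ₂, and Δ(λ, c) > 0 for λ > λ₂. -/

import Mathlib

open Real

lemma strict_convex_combo_aux (f : ℝ → ℝ) (hf : StrictConvexOn ℝ Set.univ f)
    {x y z : ℝ} (hxy : x < y) (hyz : y < z) :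
    f y < ((z - y) / (z - x)) * f x + ((y - x) / (z - x)) * f z := by
  have hxz : x < z := hxy.trans hyz
  have h1 : (0:ℝ) < z - x := by linarith
  have ht : (0:ℝ) < (z - y) / (z - x) := div_pos (by linarith) h1
  have hs : (0:ℝ) < (y - x) / (z - x) := div_pos (by linarith) h1
  have hts : (z - y) / (z - x) + (y - x) / (z - x) = 1 := by field_simp; ring
  have h2 := hf.2 (Set.mem_univ x) (Set.mem_univ z) (ne_of_lt hxz) ht hs hts
  have hy : ((z - y) / (z - x)) • x + ((y - x) / (z - x)) • z = y := by
    simp only [smul_eq_mul]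
    field_simp
    ring
  rwa [hy] at h2

/-- **Two positive roots for supercritical speeds** (Lemma 2.1 (iii) and (2.7)).
Assume `b > μ₂`, let `(λ*, c*)` be the critical pair and let `c > c*`.  Then
`Δ(·, c)` has two positive roots `λ₁ < λ* < λ₂`, with `Δ(λ, c) > 0` for
`0 < λ < λ₁`, `Δ(λ, c) < 0` for `λ₁ < λ < λ₂` and `Δ(λ, c) > 0` for `λ > λ₂`. -/
theorem characteristic_two_roots_of_speed_gt_critical
    (d₂ μ₂ b : ℝ) (hd₂ : 0 < d₂) (hμ₂ : 0 < μ₂) (hb : μ₂ < b)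
    (lamstar cstar : ℝ) (hlamstar : 0 < lamstar) (hcstar : 0 < cstar)
    (hΔstar : d₂ * (Real.exp lamstar + Real.exp (-lamstar) - 2)
      - cstar * lamstar + b - μ₂ = 0)
    (hdΔstar : d₂ * (Real.exp lamstar - Real.exp (-lamstar)) = cstar)
    (c : ℝ) (hc : cstar < c) :
    ∃ lam₁ lam₂ : ℝ, 0 < lam₁ ∧ lam₁ < lamstar ∧ lamstar < lam₂ ∧
      d₂ * (Real.exp lam₁ + Real.exp (-lam₁) - 2) - c * lam₁ + b - μ₂ = 0 ∧
      d₂ * (Real.exp lam₂ + Real.exp (-lam₂) - 2) - c * lam₂ + b - μ₂ = 0 ∧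
      (∀ lam : ℝ, 0 < lam → lam < lam₁ →
        0 < d₂ * (Real.exp lam + Real.exp (-lam) - 2) - c * lam + b - μ₂) ∧
      (∀ lam : ℝ, lam₁ < lam → lam < lam₂ →
        d₂ * (Real.exp lam + Real.exp (-lam) - 2) - c * lam + b - μ₂ < 0) ∧
      (∀ lam : ℝ, lam₂ < lam →
        0 < d₂ * (Real.exp lam + Real.exp (-lam) - 2) - c * lam + b - μ₂) := by
  set f : ℝ → ℝ := fun lam => d₂ * (Real.exp lam + Real.exp (-lam) - 2) - c * lam + b - μ₂
    with hf_def
  have hcont : Continuous f := by fun_prop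
  -- derivatives
  have hderivneg : ∀ x : ℝ, HasDerivAt (fun y : ℝ => Real.exp (-y)) (-Real.exp (-x)) x := by
    intro x
    exact ((Real.hasDerivAt_exp (-x)).comp x (hasDerivAt_neg x)).congr_deriv (by ring)
  have hderiv1 : ∀ x : ℝ, HasDerivAt f (d₂ * (Real.exp x - Real.exp (-x)) - c) x := by
    intro x
    have hA : HasDerivAt (fun y : ℝ => Real.exp y + Real.exp (-y) - 2)
        (Real.exp x - Real.exp (-x)) x := by
      simpa [sub_eq_add_neg] using ((Real.hasDerivAt_exp x).add (hderivneg x)).sub_const 2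
    have h3 : HasDerivAt (fun y : ℝ => d₂ * (Real.exp y + Real.exp (-y) - 2) - c * y)
        (d₂ * (Real.exp x - Real.exp (-x)) - c * 1) x :=
      (hA.const_mul d₂).sub ((hasDerivAt_id x).const_mul c)
    have h4 := (h3.add_const b).sub_const μ₂
    exact h4.congr_deriv (by ring)
  set g : ℝ → ℝ := fun x => d₂ * (Real.exp x - Real.exp (-x)) - c with hg_def
  have hderiv2 : ∀ x : ℝ, HasDerivAt g (d₂ * (Real.exp x + Real.exp (-x))) x := by
    intro x
    have hA : HasDerivAt (fun y : ℝ => Real.exp y - Real.exp (-y))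
        (Real.exp x + Real.exp (-x)) x := by
      exact ((Real.hasDerivAt_exp x).sub (hderivneg x)).congr_deriv (by ring)
    exact (hA.const_mul d₂).sub_const c
  have hdf : deriv f = g := funext fun x => (hderiv1 x).deriv
  have hconv : StrictConvexOn ℝ Set.univ f := by
    apply strictConvexOn_univ_of_deriv2_pos hcont
    intro x
    show 0 < deriv (deriv f) x
    rw [hdf, (hderiv2 x).deriv]
    positivity
  -- values
  have hf0 : 0 < f 0 := by simp [hf_def]; linarith
  have hfstar : f lamstar < 0 := by
    have := mul_pos (sub_pos.mpr hc) hlamstar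
    simp only [hf_def]
    nlinarith
  -- a large point where f is positive
  set L : ℝ := max (lamstar + 1) (4 * c / d₂ + 1) with hL_def
  have hLstar : lamstar < L := lt_of_lt_of_le (by linarith) (le_max_left _ _)
  have hL4 : 4 * c / d₂ + 1 ≤ L := le_max_right _ _
  have hLpos : 0 < L := hlamstar.trans hLstar
  have hfL : 0 < f L := by
    have h1 : (1 + L / 2) ^ 2 ≤ Real.exp L := by
      have h2 : 1 + L / 2 ≤ Real.exp (L / 2) := by
        linarith [Real.add_one_le_exp (L / 2)]
      have h3 : (1 + L / 2) ^ 2 ≤ (Real.exp (L / 2)) ^ 2 := by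
        apply pow_le_pow_left₀ (by positivity) h2
      calc (1 + L / 2) ^ 2 ≤ (Real.exp (L / 2)) ^ 2 := h3
        _ = Real.exp L := by rw [sq, ← Real.exp_add]; norm_num
    have h4 : 1 - L ≤ Real.exp (-L) := by
      have := Real.add_one_le_exp (-L)
      linarith
    have h5 : d₂ * (L * L) / 4 ≤ d₂ * (Real.exp L + Real.exp (-L) - 2) := by
      nlinarith
    have h6 : 4 * c / d₂ < L := by linarith
    have h7 : 4 * c < d₂ * L := by
      have := (div_lt_iff₀ hd₂).mp h6
      linarith
    simp only [hf_def]
    nlinarith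
  -- roots by IVT
  obtain ⟨lam₁, hmem₁, hroot₁⟩ :=
    intermediate_value_Ioo' hlamstar.le hcont.continuousOn ⟨hfstar, hf0⟩
  obtain ⟨lam₂, hmem₂, hroot₂⟩ :=
    intermediate_value_Ioo hLstar.le hcont.continuousOn ⟨hfstar, hfL⟩
  obtain ⟨hlam₁0, hlam₁s⟩ := hmem₁
  obtain ⟨hslam₂, hlam₂L⟩ := hmem₂
  have h12 : lam₁ < lam₂ := hlam₁s.trans hslam₂
  refine ⟨lam₁, lam₂, hlam₁0, hlam₁s, hslam₂, hroot₁, hroot₂, ?_, ?_, ?_⟩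
  · intro lam hlam0 hlam1
    have h := strict_convex_combo_aux f hconv hlam1 h12
    rw [hroot₁, hroot₂] at h
    have ht : (0:ℝ) < (lam₂ - lam₁) / (lam₂ - lam) :=
      div_pos (by linarith) (by linarith)
    by_contra hcon
    push_neg at hcon
    nlinarith
  · intro lam h1 h2
    have h := strict_convex_combo_aux f hconv h1 h2
    rw [hroot₁, hroot₂] at h
    simp only [mul_zero, add_zero, zero_add] at h
    exact h
  · intro lam h2
    have h := strict_convex_combo_aux f hconv h12 h2
    rw [hroot₁, hroot₂] at h
    have hs : (0:ℝ) < (lam₂ - lam₁) / (lam - lam₁) :=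
      div_pos (by linarith) (by linarith)
    by_contra hcon
    push_neg at hcon
    nlinarith
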